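/- If E is an integrable big-isotropic structure, f is Hamiltonian with (X_f,df) ∈ ΓE and h is weak-Hamiltonian with (X_h,dh) ∈ ΓE′, then {f,h} = X_f h is weak-Hamiltonian with weak-Hamiltonian vector field [X_f, X_h]; i.e., ([X_f,X_h], d(X_f h)) ∈ ΓE′. -/
import Mathlib

/-!
An algebraic model of Cartan calculus: functions form a commutative
`ℝ`-algebra `A`, vector fields are derivations of `A`, and `1`-forms are
modeled by their evaluation on vector fields.  The differential `dF`, the Lie
derivative `lieD`, the Courant bracket `courant`, the neutral metric `gPair`
and the `2`-form `omPair` of the big tangent bundle are given by their usual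
intrinsic formulas.
-/

variable (A : Type*) [CommRing A] [Algebra ℝ A]

/-- Vector fields: derivations of the algebra of functions. -/
abbrev VF := Derivation ℝ A A

/-- `1`-forms, modeled by their evaluation on vector fields. -/
abbrev Form1 := VF A → A

variable {A}

/-- Differential of a function: `(df)(X) = X f`. -/
def dF (f : A) : Form1 A := fun X => X f

/-- Lie derivative of a `1`-form: `(L_X α)(Y) = X(α(Y)) − α([X,Y])`. -/
def lieD (X : VF A) (α : Form1 A) : Form1 A := fun Y => X (α Y) - α ⁅X, Y⁆

/-- The Courant bracket
`[(X,α),(Y,β)] = ([X,Y], L_X β − L_Y α + (1/2) d(α(Y) − β(X)))`. -/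
noncomputable def courant (P Q : VF A × Form1 A) : VF A × Form1 A :=
  (⁅P.1, Q.1⁆,
    fun Z => lieD P.1 Q.2 Z - lieD Q.1 P.2 Z
      + ((1 : ℝ) / 2) • dF (P.2 Q.1 - Q.2 P.1) Z)

/-- The neutral metric `g((X,α),(Y,β)) = (1/2)(α(Y) + β(X))`. -/
noncomputable def gPair (P Q : VF A × Form1 A) : A := ((1 : ℝ) / 2) • (P.2 Q.1 + Q.2 P.1)

/-- The `2`-form `ω((X,α),(Y,β)) = (1/2)(α(Y) − β(X))`. -/
noncomputable def omPair (P Q : VF A × Form1 A) : A := ((1 : ℝ) / 2) • (P.2 Q.1 - Q.2 P.1)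

/-- The `g`-orthogonal `E′` of a set of sections `E`. -/
noncomputable def orthCompl (E : Set (VF A × Form1 A)) : Set (VF A × Form1 A) :=
  {Q | ∀ P ∈ E, gPair P Q = 0}

lemma half_cancel {A : Type*} [CommRing A] [Algebra ℝ A] {x : A}
    (hx : ((1 : ℝ) / 2) • x = 0) : x = 0 := by
  have := congrArg (fun y : A => (2 : ℝ) • y) hx
  simpa [smul_smul] using this

/-- If `E` is an integrable big-isotropic structure, `f` Hamiltonian and `h`
weak-Hamiltonian, then `{f,h} = X_f h` is weak-Hamiltonian with
weak-Hamiltonian vector field `[X_f, X_h]`: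
`([X_f,X_h], d(X_f h)) ∈ ΓE′`. -/
theorem poisson_bracket_weak_hamiltonian (E : Set (VF A × Form1 A))
    (hiso : ∀ P ∈ E, ∀ Q ∈ E, gPair P Q = 0)
    (hint : ∀ P ∈ E, ∀ Q ∈ E, courant P Q ∈ E)
    (f h : A) (Xf Xh : VF A)
    (hf : (Xf, dF f) ∈ E) (hh : (Xh, dF h) ∈ orthCompl E) :
    (⁅Xf, Xh⁆, dF (Xf h)) ∈ orthCompl E := by
  rintro ⟨Y, β⟩ hP
  -- key facts
  have h1 : β Xh + dF h Y = 0 := half_cancel (hh (Y, β) hP)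
  have h2 : dF f Y + β Xf = 0 := half_cancel (hiso _ hf _ hP)
  have h3 := half_cancel (hh _ (hint _ hf (Y, β) hP))
  simp only [courant, gPair, lieD, dF] at h1 h2 h3 ⊢
  have hb1 : β Xh = -(Y h) := eq_neg_of_add_eq_zero_left h1
  have hb2 : β Xf = -(Y f) := eq_neg_of_add_eq_zero_left (by linear_combination h2)
  rw [hb1, hb2, map_neg, sub_neg_eq_add, map_add, Derivation.commutator_apply,
    Derivation.commutator_apply, ← two_smul ℝ (Xh (Y f)), smul_smul] at h3
  norm_num at h3
  have key : β ⁅Xf, Xh⁆ + Y (Xf h) = 0 := by linear_combination -h3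
  rw [key, smul_zero]
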